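/- For a vector of positive reals μ of length N, let c(μ) be the infimum of the set of reals c ≥ 0 such that ‖a‖_A ≤ c·‖a‖_μ for every a ∈ A (this infimum is attained and c(μ) ≥ 1 when Σ_k μ_k = 1). Let μ^∞ and, for each n ∈ ℕ, μ^n be vectors of positive reals of length N such that μ^n_k → μ^∞_k for each k ∈ {1,…,N}. Then c(μ^n) → c(μ^∞) as n → ∞. -/

import Mathlib

open Filter Topology
open ContinuousLinearMap

/-- The direct sum `A = ⊕ₖ M_{m k}(ℂ)`, realized as block operators on the Euclidean
spaces `ℂ^{m k}`; the `Pi` sup-norm is then exactly the C*-norm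
`‖a‖_A = maxₖ ‖a k‖`, where `‖a k‖` is the ℓ²→ℓ² operator norm of the `k`-th block. -/
noncomputable abbrev BlockAlg (N : ℕ) (m : Fin N → ℕ) : Type :=
  ∀ k : Fin N, EuclideanSpace ℂ (Fin (m k)) →L[ℂ] EuclideanSpace ℂ (Fin (m k))

/-- The weighted Hilbert–Schmidt norm `‖a‖_μ = (Σₖ (μ k / m k) · Tr((a k)^* (a k)))^{1/2}`. -/
noncomputable def hsNorm {N : ℕ} {m : Fin N → ℕ} (μ : Fin N → ℝ) (a : BlockAlg N m) : ℝ :=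
  Real.sqrt (∑ k, (μ k / (m k : ℝ)) *
    (LinearMap.trace ℂ (EuclideanSpace ℂ (Fin (m k)))
      ((ContinuousLinearMap.adjoint (a k) ∘L a k :
          EuclideanSpace ℂ (Fin (m k)) →L[ℂ] EuclideanSpace ℂ (Fin (m k))) :
        EuclideanSpace ℂ (Fin (m k)) →ₗ[ℂ] EuclideanSpace ℂ (Fin (m k)))).re)

/-- The sharp constant `c(μ)`: the least `c ≥ 0` such that `‖a‖_A ≤ c · ‖a‖_μ` for all
`a ∈ A`. -/
noncomputable def sharpConst {N : ℕ} {m : Fin N → ℕ} (μ : Fin N → ℝ) : ℝ :=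
  sInf {c : ℝ | 0 ≤ c ∧ ∀ a : BlockAlg N m, ‖a‖ ≤ c * hsNorm μ a}

section aux


variable {m : ℕ}

noncomputable def trRe (a : EuclideanSpace ℂ (Fin m) →L[ℂ] EuclideanSpace ℂ (Fin m)) : ℝ :=
  (LinearMap.trace ℂ (EuclideanSpace ℂ (Fin m))
    ((ContinuousLinearMap.adjoint a ∘L a :
        EuclideanSpace ℂ (Fin m) →L[ℂ] EuclideanSpace ℂ (Fin m)) :
      EuclideanSpace ℂ (Fin m) →ₗ[ℂ] EuclideanSpace ℂ (Fin m))).re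

lemma trRe_eq (a : EuclideanSpace ℂ (Fin m) →L[ℂ] EuclideanSpace ℂ (Fin m)) :
    trRe a = ∑ i, ‖a (EuclideanSpace.single i 1)‖ ^ 2 := by
  unfold trRe
  rw [LinearMap.trace_eq_matrix_trace ℂ (EuclideanSpace.basisFun (Fin m) ℂ).toBasis]
  rw [Matrix.trace]
  simp only [Matrix.diag_apply, LinearMap.toMatrix_apply,
    OrthonormalBasis.coe_toBasis_repr_apply, EuclideanSpace.basisFun_repr,
    OrthonormalBasis.coe_toBasis, EuclideanSpace.basisFun_apply]
  rw [Complex.re_sum]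
  congr 1; ext i
  have : ((ContinuousLinearMap.adjoint a ∘L a) (EuclideanSpace.single i 1)) i
      = inner ℂ (EuclideanSpace.single i (1:ℂ)) ((ContinuousLinearMap.adjoint a ∘L a) (EuclideanSpace.single i 1)) := by
    rw [EuclideanSpace.inner_single_left]; simp
  rw [ContinuousLinearMap.coe_coe, this, ContinuousLinearMap.comp_apply,
    ContinuousLinearMap.adjoint_inner_right]
  exact inner_self_eq_norm_sq (𝕜 := ℂ) _

lemma trRe_nonneg (a : EuclideanSpace ℂ (Fin m) →L[ℂ] EuclideanSpace ℂ (Fin m)) :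
    0 ≤ trRe a := by
  rw [trRe_eq]; positivity

lemma norm_le_sqrt_trRe (a : EuclideanSpace ℂ (Fin m) →L[ℂ] EuclideanSpace ℂ (Fin m)) :
    ‖a‖ ≤ Real.sqrt (trRe a) := by
  refine a.opNorm_le_bound (Real.sqrt_nonneg _) fun x => ?_
  have hx : x = ∑ i, x i • EuclideanSpace.single i (1:ℂ) := by
    conv_lhs => rw [← (EuclideanSpace.basisFun (Fin m) ℂ).sum_repr x]
    simp [EuclideanSpace.basisFun_repr, EuclideanSpace.basisFun_apply]
  calc ‖a x‖ = ‖∑ i, x i • a (EuclideanSpace.single i 1)‖ := by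
        conv_lhs => rw [hx]
        rw [map_sum]; simp
    _ ≤ ∑ i, ‖x i • a (EuclideanSpace.single i 1)‖ := norm_sum_le _ _
    _ = ∑ i, ‖x i‖ * ‖a (EuclideanSpace.single i 1)‖ := by simp [norm_smul]
    _ ≤ Real.sqrt (∑ i, ‖x i‖ ^ 2) * Real.sqrt (∑ i, ‖a (EuclideanSpace.single i 1)‖ ^ 2) :=
        Real.sum_mul_le_sqrt_mul_sqrt _ _ _
    _ = Real.sqrt (trRe a) * ‖x‖ := by
        rw [trRe_eq, EuclideanSpace.norm_eq]
        ring

noncomputable def rankOne (i : Fin m) :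
    EuclideanSpace ℂ (Fin m) →L[ℂ] EuclideanSpace ℂ (Fin m) :=
  (innerSL ℂ (EuclideanSpace.single i (1:ℂ))).smulRight (EuclideanSpace.single i (1:ℂ))

lemma rankOne_apply (i : Fin m) (x : EuclideanSpace ℂ (Fin m)) :
    rankOne i x = (x i) • EuclideanSpace.single i (1:ℂ) := by
  simp [rankOne, EuclideanSpace.inner_single_left]

lemma norm_single_one (i : Fin m) : ‖EuclideanSpace.single i (1:ℂ)‖ = 1 := by
  rw [EuclideanSpace.norm_single]; norm_num

lemma one_le_norm_rankOne (i : Fin m) : 1 ≤ ‖rankOne i‖ := by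
  have h := (rankOne (m := m) i).le_opNorm (EuclideanSpace.single i (1:ℂ))
  rw [rankOne_apply, norm_single_one, mul_one] at h
  have h2 : (EuclideanSpace.single i (1:ℂ)) i = 1 := by
    simp [EuclideanSpace.single_apply]
  rw [h2, one_smul, norm_single_one] at h
  exact h

lemma trRe_rankOne (i : Fin m) : trRe (rankOne i) = 1 := by
  rw [trRe_eq]
  rw [Finset.sum_eq_single i]
  · rw [rankOne_apply]
    simp [EuclideanSpace.single_apply, norm_single_one]
  · intro j _ hj
    rw [rankOne_apply]
    simp [EuclideanSpace.single_apply, hj.symm]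
  · simp

lemma trRe_zero : trRe (0 : EuclideanSpace ℂ (Fin m) →L[ℂ] EuclideanSpace ℂ (Fin m)) = 0 := by
  rw [trRe_eq]; simp

noncomputable def hsNorm' {N : ℕ} {m : Fin N → ℕ} (μ : Fin N → ℝ)
    (a : ∀ k : Fin N, EuclideanSpace ℂ (Fin (m k)) →L[ℂ] EuclideanSpace ℂ (Fin (m k))) : ℝ :=
  Real.sqrt (∑ k, (μ k / (m k : ℝ)) * trRe (a k))

section main
variable {N : ℕ} {m : Fin N → ℕ}

lemma sharpConst_eq' (hN : 1 ≤ N) (hm : ∀ k, 1 ≤ m k) (μ : Fin N → ℝ) (hμ : ∀ k, 0 < μ k)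
    (hne : (Finset.univ : Finset (Fin N)).Nonempty) :
    sInf {c : ℝ | 0 ≤ c ∧
        ∀ a : (∀ k : Fin N, EuclideanSpace ℂ (Fin (m k)) →L[ℂ] EuclideanSpace ℂ (Fin (m k))),
          ‖a‖ ≤ c * hsNorm' μ a}
      = Finset.univ.sup' hne fun k => Real.sqrt ((m k : ℝ) / μ k) := by
  set C := Finset.univ.sup' hne fun k => Real.sqrt ((m k : ℝ) / μ k) with hC
  obtain ⟨k0, -⟩ := id hne
  have hC0 : 0 ≤ C := by
    rw [hC]
    exact le_trans (Real.sqrt_nonneg ((m k0 : ℝ) / μ k0))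
      (Finset.le_sup' (fun k => Real.sqrt ((m k : ℝ) / μ k)) (Finset.mem_univ k0))
  have hsum_nonneg : ∀ (a : (∀ k : Fin N,
      EuclideanSpace ℂ (Fin (m k)) →L[ℂ] EuclideanSpace ℂ (Fin (m k)))) (k : Fin N),
      0 ≤ (μ k / (m k : ℝ)) * trRe (a k) := fun a k =>
    mul_nonneg (div_nonneg (hμ k).le (Nat.cast_nonneg _)) (trRe_nonneg _)
  have hmem : ∀ a : (∀ k : Fin N,
      EuclideanSpace ℂ (Fin (m k)) →L[ℂ] EuclideanSpace ℂ (Fin (m k))),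
      ‖a‖ ≤ C * hsNorm' μ a := by
    intro a
    have hh0 : 0 ≤ hsNorm' μ a := Real.sqrt_nonneg _
    refine pi_norm_le_iff_of_nonneg (mul_nonneg hC0 hh0) |>.2 fun k => ?_
    have hmk : (0:ℝ) < m k := by exact_mod_cast hm k
    have h1 : ‖a k‖ ≤ Real.sqrt ((m k : ℝ) / μ k) *
        Real.sqrt ((μ k / (m k : ℝ)) * trRe (a k)) := by
      rw [← Real.sqrt_mul (div_nonneg hmk.le (hμ k).le)]
      have : (m k : ℝ) / μ k * (μ k / (m k : ℝ) * trRe (a k)) = trRe (a k) := by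
        rw [← mul_assoc, div_mul_div_comm, mul_comm (m k : ℝ) (μ k),
          div_self (mul_pos (hμ k) hmk).ne', one_mul]
      rw [this]
      exact norm_le_sqrt_trRe _
    have h2 : Real.sqrt ((μ k / (m k : ℝ)) * trRe (a k)) ≤ hsNorm' μ a :=
      Real.sqrt_le_sqrt (Finset.single_le_sum (fun j _ => hsum_nonneg a j) (Finset.mem_univ k))
    calc ‖a k‖ ≤ Real.sqrt ((m k : ℝ) / μ k) * Real.sqrt ((μ k / (m k : ℝ)) * trRe (a k)) := h1
      _ ≤ C * hsNorm' μ a := by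
        rw [hC]
        exact mul_le_mul (Finset.le_sup' (fun k => Real.sqrt ((m k : ℝ) / μ k))
          (Finset.mem_univ k)) h2 (Real.sqrt_nonneg _) hC0
  have hlow : ∀ c : ℝ, (0 ≤ c ∧ ∀ a : (∀ k : Fin N,
      EuclideanSpace ℂ (Fin (m k)) →L[ℂ] EuclideanSpace ℂ (Fin (m k))),
      ‖a‖ ≤ c * hsNorm' μ a) → C ≤ c := by
    rintro c ⟨hc0, hc⟩
    refine Finset.sup'_le _ _ fun k _ => ?_
    have hmk : (0:ℝ) < m k := by exact_mod_cast hm k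
    set i0 : Fin (m k) := ⟨0, hm k⟩
    set a : (∀ j : Fin N, EuclideanSpace ℂ (Fin (m j)) →L[ℂ] EuclideanSpace ℂ (Fin (m j))) :=
      Pi.single k (rankOne i0) with ha
    have hak : a k = rankOne i0 := by rw [ha, Pi.single_eq_same]
    have h1 : (1:ℝ) ≤ ‖a‖ := by
      refine le_trans ?_ (norm_le_pi_norm a k)
      rw [hak]; exact one_le_norm_rankOne i0
    have hhs : hsNorm' μ a = Real.sqrt (μ k / (m k : ℝ)) := by
      unfold hsNorm'
      congr 1
      rw [Finset.sum_eq_single k]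
      · rw [hak, trRe_rankOne, mul_one]
      · intro j _ hj
        rw [ha, Pi.single_eq_of_ne hj, trRe_zero, mul_zero]
      · simp
    have hkey := hc a
    rw [hhs] at hkey
    have hs : (0:ℝ) < Real.sqrt (μ k / (m k : ℝ)) :=
      Real.sqrt_pos.2 (div_pos (hμ k) hmk)
    have : 1 / Real.sqrt (μ k / (m k : ℝ)) ≤ c := by
      rw [div_le_iff₀ hs]
      exact le_trans h1 hkey
    rw [one_div, ← Real.sqrt_inv, inv_div] at this
    exact this
  refine le_antisymm (csInf_le ⟨C, fun c hc => hlow c hc⟩ ⟨hC0, hmem⟩)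
    (le_csInf ⟨C, hC0, hmem⟩ fun c hc => hlow c hc)

end main

lemma hsNorm_eq_hsNorm' {N : ℕ} {m : Fin N → ℕ} (μ : Fin N → ℝ) (a : BlockAlg N m) :
    hsNorm μ a = hsNorm' μ a := rfl


end aux

/-- If the positive weight vectors `μⁿ` converge componentwise to the
positive weight vector `μ^∞`, then the sharp constants converge: `c(μⁿ) → c(μ^∞)`. -/
theorem sharpConst_tendsto
    {N : ℕ} (hN : 1 ≤ N) (m : Fin N → ℕ) (hm : ∀ k, 1 ≤ m k)
    (μ : ℕ → Fin N → ℝ) (μlim : Fin N → ℝ)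
    (hμpos : ∀ n k, 0 < μ n k) (hμlimpos : ∀ k, 0 < μlim k)
    (hconv : ∀ k, Tendsto (fun n => μ n k) atTop (𝓝 (μlim k))) :
    Tendsto (fun n => sharpConst (m := m) (μ n)) atTop (𝓝 (sharpConst (m := m) μlim)) := by
  have hne : (Finset.univ : Finset (Fin N)).Nonempty := ⟨⟨0, hN⟩, Finset.mem_univ _⟩
  have heq : ∀ (ν : Fin N → ℝ), (∀ k, 0 < ν k) → sharpConst (m := m) ν =
      Finset.univ.sup' hne fun k => Real.sqrt ((m k : ℝ) / ν k) := by
    intro ν hν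
    have h0 : sharpConst (m := m) ν = sInf {c : ℝ | 0 ≤ c ∧
        ∀ a : (∀ k : Fin N, EuclideanSpace ℂ (Fin (m k)) →L[ℂ] EuclideanSpace ℂ (Fin (m k))),
          ‖a‖ ≤ c * hsNorm' ν a} := by
      simp only [sharpConst, hsNorm_eq_hsNorm']
    rw [h0, sharpConst_eq' hN hm ν hν hne]
  simp only [heq _ (hμpos _), heq μlim hμlimpos]
  exact Tendsto.finset_sup'_nhds_apply hne fun k _ =>
    (tendsto_const_nhds.div (hconv k) (hμlimpos k).ne').sqrt
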